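/- Let d = (d_{γρ}) be a real 3×3 matrix, let U be a neighbourhood of the origin in ℝ³, and suppose F : U → ℝ is continuous at 0 and satisfies F(y) = ∑_{γ,ρ} d_{γρ} y_γ y_ρ/|y|² for all y ∈ U with y ≠ 0. Then the symmetric part of d is a multiple of the identity, namely d_{γρ} + d_{ργ} = (2 tr(d)/3) δ_{γρ} for all γ, ρ, and F(0) = tr(d)/3. -/

import Mathlib

noncomputable section

open Filter

lemma esum_sq (u : EuclideanSpace ℝ (Fin 3)) : ‖u‖ ^ 2 = ∑ i, u i ^ 2 := by
  rw [EuclideanSpace.norm_eq]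
  rw [Real.sq_sqrt (Finset.sum_nonneg fun i _ => sq_nonneg _)]
  simp [Real.norm_eq_abs, sq_abs]

lemma key_lemma
    (d : Matrix (Fin 3) (Fin 3) ℝ)
    (U : Set (EuclideanSpace ℝ (Fin 3))) (hU : U ∈ nhds (0 : EuclideanSpace ℝ (Fin 3)))
    (F : EuclideanSpace ℝ (Fin 3) → ℝ) (hF : ContinuousAt F 0)
    (hFd : ∀ y ∈ U, y ≠ 0 → F y = ∑ γ, ∑ ρ, d γ ρ * y γ * y ρ / ‖y‖ ^ 2)
    (u : EuclideanSpace ℝ (Fin 3)) (hu : u ≠ 0) :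
    ∑ γ, ∑ ρ, d γ ρ * u γ * u ρ = F 0 * ‖u‖ ^ 2 := by
  have hseq : Tendsto (fun n : ℕ => ((n : ℝ) + 1)⁻¹ • u) atTop (nhds 0) := by
    have h1 : Tendsto (fun n : ℕ => ((n : ℝ) + 1)⁻¹) atTop (nhds 0) := by
      simpa [one_div] using tendsto_one_div_add_atTop_nhds_zero_nat (𝕜 := ℝ)
    simpa using h1.smul_const u
  have hFseq : Tendsto (fun n : ℕ => F (((n : ℝ) + 1)⁻¹ • u)) atTop (nhds (F 0)) :=
    hF.tendsto.comp hseq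
  have hev : ∀ᶠ n : ℕ in atTop,
      F (((n : ℝ) + 1)⁻¹ • u) = (∑ γ, ∑ ρ, d γ ρ * u γ * u ρ) / ‖u‖ ^ 2 := by
    filter_upwards [hseq.eventually_mem hU] with n hn
    set c : ℝ := ((n : ℝ) + 1)⁻¹ with hc
    have hcpos : (0 : ℝ) < c := by positivity
    have hcne : c ≠ 0 := ne_of_gt hcpos
    have hne : c • u ≠ 0 := smul_ne_zero hcne hu
    rw [hFd _ hn hne]
    have hnorm : ‖c • u‖ ^ 2 = c ^ 2 * ‖u‖ ^ 2 := by
      rw [norm_smul]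
      rw [Real.norm_eq_abs]
      rw [mul_pow, sq_abs]
    rw [hnorm, Finset.sum_div]
    refine Finset.sum_congr rfl fun γ _ => ?_
    rw [Finset.sum_div]
    refine Finset.sum_congr rfl fun ρ _ => ?_
    have : (c • u) γ = c * u γ := rfl
    have h2 : (c • u) ρ = c * u ρ := rfl
    rw [this, h2]
    rw [show d γ ρ * (c * u γ) * (c * u ρ) = c ^ 2 * (d γ ρ * u γ * u ρ) by ring,
      show c ^ 2 * ‖u‖ ^ 2 = c ^ 2 * ‖u‖ ^ 2 from rfl]
    exact mul_div_mul_left _ _ (pow_ne_zero 2 hcne)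
  have hthis := tendsto_nhds_unique (hFseq.congr' hev) tendsto_const_nhds
  have hun : ‖u‖ ^ 2 ≠ 0 := pow_ne_zero 2 (norm_ne_zero_iff.mpr hu)
  rw [eq_div_iff hun] at hthis
  exact hthis.symm

theorem singular_part_uniqueness
    (d : Matrix (Fin 3) (Fin 3) ℝ)
    (U : Set (EuclideanSpace ℝ (Fin 3))) (hU : U ∈ nhds (0 : EuclideanSpace ℝ (Fin 3)))
    (F : EuclideanSpace ℝ (Fin 3) → ℝ) (hF : ContinuousAt F 0)
    (hFd : ∀ y ∈ U, y ≠ 0 → F y = ∑ γ, ∑ ρ, d γ ρ * y γ * y ρ / ‖y‖ ^ 2) :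
    (∀ γ ρ, d γ ρ + d ρ γ = (2 * d.trace / 3) * (if γ = ρ then 1 else 0)) ∧
    F 0 = d.trace / 3 := by
  have key := key_lemma d U hU F hF hFd
  set c := F 0 with hc
  have hdiag : ∀ γ, d γ γ = c := by
    intro γ
    have hne : EuclideanSpace.single γ (1 : ℝ) ≠ 0 := by
      intro h
      have h2 : EuclideanSpace.single γ (1 : ℝ) γ = 0 := by rw [h]; rfl
      simp [EuclideanSpace.single_apply] at h2
    have h1 := key (EuclideanSpace.single γ 1) hne
    rw [esum_sq] at h1
    simpa [EuclideanSpace.single_apply, mul_ite, ite_mul, Finset.sum_ite_eq',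
      sq] using h1
  have hoff : ∀ γ ρ, γ ≠ ρ → d γ ρ + d ρ γ = 0 := by
    intro γ ρ hγρ
    set u : EuclideanSpace ℝ (Fin 3) := EuclideanSpace.single γ 1 + EuclideanSpace.single ρ 1 with hu
    have hune : u ≠ 0 := by
      intro h
      have : u γ = 0 := by rw [h]; rfl
      simp [hu, EuclideanSpace.single_apply, hγρ] at this
    have h1 := key u hune
    rw [esum_sq] at h1
    simp only [hu, PiLp.add_apply, EuclideanSpace.single_apply] at h1
    simp [mul_add, add_mul, mul_ite, ite_mul, mul_one, mul_zero, one_mul, zero_mul,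
      Finset.sum_add_distrib, Finset.sum_ite_eq', sq, hγρ, hγρ.symm,
      (fun h => hγρ h.symm : ρ = γ → False)] at h1
    have h2 := hdiag γ
    have h3 := hdiag ρ
    linarith
  have htr : d.trace = 3 * c := by
    rw [Matrix.trace]
    simp [Matrix.diag, Fin.sum_univ_three, hdiag]
  constructor
  · intro γ ρ
    by_cases h : γ = ρ
    · subst h
      simp [htr, hdiag γ]
      ring
    · simp [h, hoff γ ρ h]
  · rw [htr]; ring
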